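/- Let S, P_A, P_B, P_C be unital complex algebras, let ω be a linear functional on S and σ_A, σ_B, σ_C linear functionals on P_A, P_B, P_C with σ_A(1) = σ_C(1) = 1, and let Θ_A, Θ_B, Θ_C be unital algebra automorphisms of S⊗P_A, S⊗P_B, S⊗P_C. On S⊗P_A⊗P_B⊗P_C let Θ̂_A, Θ̂_B, Θ̂_C denote the extensions acting on the system factor together with the second, third and fourth tensor factor respectively, and trivially on the remaining factors. Then for every O_B ∈ P_B: (ω⊗σ_A⊗σ_B⊗σ_C)((Θ̂_A ∘ Θ̂_B ∘ Θ̂_C)(1⊗1⊗O_B⊗1)) = J_A(ω)(ε_B(O_B)), where ε_B(O) := (id_S⊗σ_B)(Θ_B(1⊗O)) and J_A(ω)(C) := (ω⊗σ_A)(Θ_A(C⊗1)). That is, in the causal order A ≤ B ≤ C, observer B's expected outcome is obtained by updating the state by A's measurement, and the later observer C can be completely ignored. -/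

import Mathlib

open scoped TensorProduct

noncomputable section

variable {S PA PB : Type*} [Ring S] [Algebra ℂ S]
  [Ring PA] [Algebra ℂ PA] [Ring PB] [Algebra ℂ PB]

/-- The tensor product `ω ⊗ σ` of two linear functionals, determined by
`(ω ⊗ σ)(a ⊗ b) = ω a * σ b`. -/
def tensorFunctional {A B : Type*} [Ring A] [Algebra ℂ A]
    [Ring B] [Algebra ℂ B] (ω : A →ₗ[ℂ] ℂ) (σ : B →ₗ[ℂ] ℂ) :
    A ⊗[ℂ] B →ₗ[ℂ] ℂ :=
  (TensorProduct.lid ℂ ℂ).toLinearMap.comp (TensorProduct.map ω σ)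

/-- The partial trace `id_S ⊗ σ : S ⊗ P →ₗ S`, determined by `a ⊗ b ↦ σ(b) • a`. -/
def idTensorFunctional (S : Type*) [Ring S] [Algebra ℂ S] {P : Type*}
    [Ring P] [Algebra ℂ P] (σ : P →ₗ[ℂ] ℂ) : S ⊗[ℂ] P →ₗ[ℂ] S :=
  (TensorProduct.rid ℂ S).toLinearMap.comp (TensorProduct.map LinearMap.id σ)

/-- The rearrangement isomorphism `(S ⊗ P_A) ⊗ P_B ≃ (S ⊗ P_B) ⊗ P_A`
exchanging the two probe factors. -/
def probeSwap (S PA PB : Type*) [Ring S] [Algebra ℂ S]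
    [Ring PA] [Algebra ℂ PA] [Ring PB] [Algebra ℂ PB] :
    ((S ⊗[ℂ] PA) ⊗[ℂ] PB) ≃ₐ[ℂ] ((S ⊗[ℂ] PB) ⊗[ℂ] PA) :=
  (Algebra.TensorProduct.assoc ℂ ℂ ℂ S PA PB).trans
    ((Algebra.TensorProduct.congr AlgEquiv.refl
        (Algebra.TensorProduct.comm ℂ PA PB)).trans
      (Algebra.TensorProduct.assoc ℂ ℂ ℂ S PB PA).symm)

/-- The extension `Θ̂_A` of an automorphism `Θ_A` of `S ⊗ P_A` to
`(S ⊗ P_A) ⊗ P_B`, acting trivially on `P_B`. -/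
def hatA (ΘA : (S ⊗[ℂ] PA) ≃ₐ[ℂ] (S ⊗[ℂ] PA)) :
    ((S ⊗[ℂ] PA) ⊗[ℂ] PB) ≃ₐ[ℂ] ((S ⊗[ℂ] PA) ⊗[ℂ] PB) :=
  Algebra.TensorProduct.congr ΘA AlgEquiv.refl

/-- The extension `Θ̂_B` of an automorphism `Θ_B` of `S ⊗ P_B` to
`(S ⊗ P_A) ⊗ P_B`, acting on the first and third tensor factors and trivially
on `P_A`. -/
def hatB (ΘB : (S ⊗[ℂ] PB) ≃ₐ[ℂ] (S ⊗[ℂ] PB)) :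
    ((S ⊗[ℂ] PA) ⊗[ℂ] PB) ≃ₐ[ℂ] ((S ⊗[ℂ] PA) ⊗[ℂ] PB) :=
  (probeSwap S PA PB).trans ((Algebra.TensorProduct.congr ΘB AlgEquiv.refl).trans
    (probeSwap S PA PB).symm)

/-- The induced system observable `ε(O) = (id_S ⊗ σ)(Θ (1 ⊗ O))` of a probe
observable `O`. -/
def inducedObservable {P : Type*} [Ring P] [Algebra ℂ P] (σ : P →ₗ[ℂ] ℂ)
    (Θ : (S ⊗[ℂ] P) ≃ₐ[ℂ] (S ⊗[ℂ] P)) (O : P) : S :=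
  idTensorFunctional S σ (Θ ((1 : S) ⊗ₜ[ℂ] O))

variable {PC : Type*} [Ring PC] [Algebra ℂ PC]

/-- The non-selective state-update map `J(ω) : C ↦ (ω ⊗ σ)(Θ (C ⊗ 1))`. -/
def updateMap {P : Type*} [Ring P] [Algebra ℂ P] (σ : P →ₗ[ℂ] ℂ)
    (Θ : (S ⊗[ℂ] P) ≃ₐ[ℂ] (S ⊗[ℂ] P)) (ω : S →ₗ[ℂ] ℂ) : S →ₗ[ℂ] ℂ :=
  (tensorFunctional ω σ).comp (Θ.toLinearMap.comp ((TensorProduct.mk ℂ S P).flip (1 : P)))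

/-- The extension of `Θ_A` to `S ⊗ P_A ⊗ P_B ⊗ P_C`, acting on the system
factor and the second tensor factor. -/
def hat4A (ΘA : (S ⊗[ℂ] PA) ≃ₐ[ℂ] (S ⊗[ℂ] PA)) :
    (((S ⊗[ℂ] PA) ⊗[ℂ] PB) ⊗[ℂ] PC) ≃ₐ[ℂ] (((S ⊗[ℂ] PA) ⊗[ℂ] PB) ⊗[ℂ] PC) :=
  Algebra.TensorProduct.congr (hatA ΘA) AlgEquiv.refl

/-- The extension of `Θ_B` to `S ⊗ P_A ⊗ P_B ⊗ P_C`, acting on the system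
factor and the third tensor factor. -/
def hat4B (ΘB : (S ⊗[ℂ] PB) ≃ₐ[ℂ] (S ⊗[ℂ] PB)) :
    (((S ⊗[ℂ] PA) ⊗[ℂ] PB) ⊗[ℂ] PC) ≃ₐ[ℂ] (((S ⊗[ℂ] PA) ⊗[ℂ] PB) ⊗[ℂ] PC) :=
  Algebra.TensorProduct.congr (hatB ΘB) AlgEquiv.refl

/-- The extension of `Θ_C` to `S ⊗ P_A ⊗ P_B ⊗ P_C`, acting on the system
factor and the fourth tensor factor. -/
def hat4C (ΘC : (S ⊗[ℂ] PC) ≃ₐ[ℂ] (S ⊗[ℂ] PC)) :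
    (((S ⊗[ℂ] PA) ⊗[ℂ] PB) ⊗[ℂ] PC) ≃ₐ[ℂ] (((S ⊗[ℂ] PA) ⊗[ℂ] PB) ⊗[ℂ] PC) :=
  (probeSwap (S ⊗[ℂ] PA) PB PC).trans
    ((Algebra.TensorProduct.congr (hatB ΘC) AlgEquiv.refl).trans
      (probeSwap (S ⊗[ℂ] PA) PB PC).symm)

set_option synthInstance.maxHeartbeats 800000
set_option maxHeartbeats 1600000

lemma tensorFunctional_tmul {A B : Type*} [Ring A] [Algebra ℂ A]
    [Ring B] [Algebra ℂ B] (ω : A →ₗ[ℂ] ℂ) (σ : B →ₗ[ℂ] ℂ) (a : A) (b : B) :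
    tensorFunctional ω σ (a ⊗ₜ[ℂ] b) = ω a * σ b := by
  simp [tensorFunctional]

lemma probeSwap_tmul (s : S) (a : PA) (b : PB) :
    probeSwap S PA PB ((s ⊗ₜ[ℂ] a) ⊗ₜ[ℂ] b) = (s ⊗ₜ[ℂ] b) ⊗ₜ[ℂ] a := by
  simp [probeSwap, Algebra.TensorProduct.assoc_tmul, Algebra.TensorProduct.congr_apply,
    Algebra.TensorProduct.comm_tmul, Algebra.TensorProduct.assoc_symm_tmul]

lemma probeSwap_symm_tmul (s : S) (b : PB) (a : PA) :
    (probeSwap S PA PB).symm ((s ⊗ₜ[ℂ] b) ⊗ₜ[ℂ] a) = (s ⊗ₜ[ℂ] a) ⊗ₜ[ℂ] b := by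
  rw [AlgEquiv.symm_apply_eq, probeSwap_tmul]

lemma keyz {PC : Type*} [Ring PC] [Algebra ℂ PC]
    (ω : S →ₗ[ℂ] ℂ) (σA : PA →ₗ[ℂ] ℂ) (σB : PB →ₗ[ℂ] ℂ) (σC : PC →ₗ[ℂ] ℂ)
    (hσC : σC 1 = 1) (b : PB) (z : S ⊗[ℂ] PA) :
    tensorFunctional (tensorFunctional (tensorFunctional ω σA) σB) σC
      ((z ⊗ₜ[ℂ] b) ⊗ₜ[ℂ] (1 : PC))
    = σB b • tensorFunctional ω σA z := by
  induction z using TensorProduct.induction_on with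
  | zero => rw [TensorProduct.zero_tmul, TensorProduct.zero_tmul, map_zero, map_zero, smul_zero]
  | tmul s a => simp [tensorFunctional_tmul, hσC]; ring
  | add x y hx hy =>
      rw [TensorProduct.add_tmul, TensorProduct.add_tmul, map_add, hx, hy, map_add, smul_add]

lemma key {PC : Type*} [Ring PC] [Algebra ℂ PC]
    (ω : S →ₗ[ℂ] ℂ) (σA : PA →ₗ[ℂ] ℂ) (σB : PB →ₗ[ℂ] ℂ) (σC : PC →ₗ[ℂ] ℂ)
    (hσC : σC 1 = 1)
    (ΘA : (S ⊗[ℂ] PA) ≃ₐ[ℂ] (S ⊗[ℂ] PA)) (y : S ⊗[ℂ] PB) :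
    tensorFunctional (tensorFunctional (tensorFunctional ω σA) σB) σC
      ((hat4A (PB := PB) (PC := PC) ΘA)
        (((probeSwap S PA PB).symm (y ⊗ₜ[ℂ] (1 : PA))) ⊗ₜ[ℂ] (1 : PC)))
    = updateMap σA ΘA ω (idTensorFunctional S σB y) := by
  induction y using TensorProduct.induction_on with
  | zero =>
      rw [TensorProduct.zero_tmul, map_zero, TensorProduct.zero_tmul, map_zero, map_zero,
        map_zero, map_zero]
  | tmul s b =>
      rw [probeSwap_symm_tmul]
      have h1 : (hat4A (PB := PB) (PC := PC) ΘA)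
          (((s ⊗ₜ[ℂ] (1 : PA)) ⊗ₜ[ℂ] b) ⊗ₜ[ℂ] (1 : PC))
          = ((ΘA (s ⊗ₜ[ℂ] (1 : PA))) ⊗ₜ[ℂ] b) ⊗ₜ[ℂ] (1 : PC) := by
        simp [hat4A, hatA, Algebra.TensorProduct.congr_apply]
      rw [h1, keyz ω σA σB σC hσC]
      have h2 : idTensorFunctional S σB (s ⊗ₜ[ℂ] b) = σB b • s := by
        simp [idTensorFunctional]
      rw [h2, map_smul]
      rfl
  | add x y hx hy =>
      rw [TensorProduct.add_tmul, map_add, TensorProduct.add_tmul, map_add, map_add, hx, hy,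
        map_add, map_add]

/-- In the causal order `A ≤ B ≤ C`, observer `B`'s expected outcome is the
expectation of `B`'s induced observable in the state updated by `A`'s
measurement; the later observer `C` can be completely ignored:
`(ω ⊗ σ_A ⊗ σ_B ⊗ σ_C)((Θ̂_A ∘ Θ̂_B ∘ Θ̂_C)(1 ⊗ 1 ⊗ O_B ⊗ 1)) = J_A(ω)(ε_B(O_B))`. -/
theorem three_observers_middle_expectation
    (ω : S →ₗ[ℂ] ℂ) (σA : PA →ₗ[ℂ] ℂ) (σB : PB →ₗ[ℂ] ℂ) (σC : PC →ₗ[ℂ] ℂ)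
    (hσA : σA 1 = 1) (hσC : σC 1 = 1)
    (ΘA : (S ⊗[ℂ] PA) ≃ₐ[ℂ] (S ⊗[ℂ] PA)) (ΘB : (S ⊗[ℂ] PB) ≃ₐ[ℂ] (S ⊗[ℂ] PB))
    (ΘC : (S ⊗[ℂ] PC) ≃ₐ[ℂ] (S ⊗[ℂ] PC)) (OB : PB) :
    tensorFunctional (tensorFunctional (tensorFunctional ω σA) σB) σC
      ((hat4A ΘA) ((hat4B ΘB) ((hat4C ΘC)
        ((((1 : S) ⊗ₜ[ℂ] (1 : PA)) ⊗ₜ[ℂ] OB) ⊗ₜ[ℂ] (1 : PC)))))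
    = updateMap σA ΘA ω (inducedObservable σB ΘB OB) := by
  have hone : ((1 : S) ⊗ₜ[ℂ] (1 : PA)) ⊗ₜ[ℂ] (1 : PC) = (1 : (S ⊗[ℂ] PA) ⊗[ℂ] PC) := by
    simp [Algebra.TensorProduct.one_def]
  have hC : (hat4C (PA := PA) (PB := PB) ΘC)
      ((((1 : S) ⊗ₜ[ℂ] (1 : PA)) ⊗ₜ[ℂ] OB) ⊗ₜ[ℂ] (1 : PC))
      = (((1 : S) ⊗ₜ[ℂ] (1 : PA)) ⊗ₜ[ℂ] OB) ⊗ₜ[ℂ] (1 : PC) := by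
    simp only [hat4C, AlgEquiv.trans_apply]
    rw [probeSwap_tmul, hone]
    rw [show (Algebra.TensorProduct.congr (hatB ΘC) AlgEquiv.refl)
        ((1 : (S ⊗[ℂ] PA) ⊗[ℂ] PC) ⊗ₜ[ℂ] OB)
        = (1 : (S ⊗[ℂ] PA) ⊗[ℂ] PC) ⊗ₜ[ℂ] OB by
      simp [Algebra.TensorProduct.congr_apply]]
    rw [← hone]
    rw [probeSwap_symm_tmul]
  have hBi : (hatB (PA := PA) ΘB) (((1 : S) ⊗ₜ[ℂ] (1 : PA)) ⊗ₜ[ℂ] OB)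
      = (probeSwap S PA PB).symm ((ΘB ((1 : S) ⊗ₜ[ℂ] OB)) ⊗ₜ[ℂ] (1 : PA)) := by
    simp only [hatB, AlgEquiv.trans_apply]
    rw [probeSwap_tmul]
    congr 1
  have hB : (hat4B (PC := PC) ΘB)
      ((((1 : S) ⊗ₜ[ℂ] (1 : PA)) ⊗ₜ[ℂ] OB) ⊗ₜ[ℂ] (1 : PC))
      = ((probeSwap S PA PB).symm ((ΘB ((1 : S) ⊗ₜ[ℂ] OB)) ⊗ₜ[ℂ] (1 : PA))) ⊗ₜ[ℂ] (1 : PC) := by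
    simp [hat4B, Algebra.TensorProduct.congr_apply, hBi]
  rw [hC, hB, key ω σA σB σC hσC]
  rfl


end
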